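/- For every β with 0 ≤ β < 1 and every real a with a ∉ ℤ, and for every integer j, one has ∑_{n ∈ ℤ} β^{|n+j|}/|n − a| ≤ 1/dist(a, ℤ) + 2 + 6·|log(1 − β)|. -/

import Mathlib

open Finset

private lemma round_min (x : ℝ) (m : ℤ) : |x - round x| ≤ |x - (m : ℝ)| := by
  by_cases h : m = round x
  · rw [h]
  · have h1 : (1 : ℝ) ≤ |(m : ℝ) - (round x : ℝ)| := by
      have : (1 : ℤ) ≤ |m - round x| := Int.one_le_abs (sub_ne_zero.mpr h)
      exact_mod_cast this
    have h2 : |x - (round x : ℝ)| ≤ 1 / 2 := abs_sub_round x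
    have h3 : |(m : ℝ) - (round x : ℝ)| ≤ |(m : ℝ) - x| + |x - (round x : ℝ)| :=
      abs_sub_le _ _ _
    have h4 : |(m : ℝ) - x| = |x - (m : ℝ)| := abs_sub_comm _ _
    linarith

set_option maxHeartbeats 1000000 in
private lemma key (β b : ℝ) (hβ0 : 0 < β) (hβ1 : β < 1) (r : ℕ)
    (hbr : |b - (r : ℝ)| ≤ 1 / 2) (hne : b ≠ (r : ℝ)) :
    ∑' m : ℤ, β ^ m.natAbs / |(m : ℝ) - b|
      ≤ 1 / |b - (r : ℝ)| + 2 + 6 * (-Real.log (1 - β)) := by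
  have hβ0' : (0 : ℝ) ≤ β := hβ0.le
  have hβ1' : β ≤ 1 := hβ1.le
  set L : ℝ := -Real.log (1 - β) with hLdef
  have hasL : HasSum (fun n : ℕ => β ^ (n + 1) / ((n : ℝ) + 1)) L :=
    Real.hasSum_pow_div_log_of_abs_lt_one (by rwa [abs_of_nonneg hβ0'])
  have sumL : Summable (fun n : ℕ => β ^ (n + 1) / ((n : ℝ) + 1)) := hasL.summable
  have sumL2 : Summable (fun n : ℕ => 2 * (β ^ (n + 1) / ((n : ℝ) + 1))) := sumL.mul_left 2
  have tsumL2 : ∑' n : ℕ, 2 * (β ^ (n + 1) / ((n : ℝ) + 1)) = 2 * L := by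
    rw [tsum_mul_left, hasL.tsum_eq]
  have hL0 : 0 ≤ L := by
    have : Real.log (1 - β) ≤ 0 := Real.log_nonpos (by linarith) (by linarith)
    simp only [hLdef]; linarith
  have hble := abs_le.mp hbr
  have hb_lb : (r : ℝ) - 1 / 2 ≤ b := by linarith [hble.1]
  have hb_ub : b ≤ (r : ℝ) + 1 / 2 := by linarith [hble.2]
  have hr0 : (0 : ℝ) ≤ (r : ℝ) := Nat.cast_nonneg r
  have hd_pos : 0 < |b - (r : ℝ)| := abs_pos.mpr (sub_ne_zero.mpr hne)
  set g : ℕ → ℝ := fun n => β ^ n / |(n : ℝ) - b| with hgdef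
  set h : ℕ → ℝ := fun n => β ^ (n + 1) / ((n : ℝ) + 1 + b) with hhdef
  have hg_nonneg : ∀ n, 0 ≤ g n := fun n => div_nonneg (pow_nonneg hβ0' _) (abs_nonneg _)
  have habs_lb : ∀ n : ℕ, n ≠ r → 1 / 2 ≤ |(n : ℝ) - b| := by
    intro n hn
    have h1 : (1 : ℝ) ≤ |(n : ℝ) - (r : ℝ)| := by
      have : (1 : ℤ) ≤ |(n : ℤ) - (r : ℤ)| := Int.one_le_abs (by omega)
      exact_mod_cast this
    have h2 : |(n : ℝ) - (r : ℝ)| ≤ |(n : ℝ) - b| + |b - (r : ℝ)| := abs_sub_le _ _ _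
    linarith
  have hgr : g r ≤ 1 / |b - (r : ℝ)| := by
    simp only [hgdef]
    rw [abs_sub_comm]
    exact div_le_div₀ (by norm_num) (pow_le_one₀ hβ0' hβ1') hd_pos le_rfl
  -- summability of g
  have sum_g : Summable g := by
    refine Summable.of_nonneg_of_le hg_nonneg (fun n => ?_)
      (((summable_geometric_of_lt_one hβ0' hβ1).mul_left 2).add
        (summable_of_ne_finset_zero (s := {r})
          (f := fun n => if n = r then 1 / |b - (r : ℝ)| else 0) (by intro n hn; simp_all)))
    by_cases hn : n = r
    · subst hn
      rw [if_pos rfl]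
      have h0 : (0:ℝ) ≤ 2 * β ^ n := by positivity
      linarith [hgr]
    · have h1 := habs_lb n hn
      have h2 : g n ≤ 2 * β ^ n := by
        simp only [hgdef]
        rw [div_le_iff₀ (by linarith)]
        nlinarith [pow_nonneg hβ0' n]
      simp only [if_neg hn, add_zero]
      exact h2
  -- summability and bounds for h (negative side)
  have hh_denom : ∀ n : ℕ, (0:ℝ) < (n : ℝ) + 1 + b := by
    intro n
    have := Nat.cast_nonneg (α := ℝ) n
    linarith
  have hh_nonneg : ∀ n, 0 ≤ h n := fun n => div_nonneg (pow_nonneg hβ0' _) (hh_denom n).le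
  have hh_le2 : ∀ n : ℕ, h n ≤ 2 * (β ^ (n + 1) / ((n : ℝ) + 1)) := by
    intro n
    have hn0 := Nat.cast_nonneg (α := ℝ) n
    have : ((n:ℝ) + 1) / 2 ≤ (n : ℝ) + 1 + b := by linarith
    calc h n ≤ β ^ (n+1) / (((n:ℝ) + 1) / 2) :=
          div_le_div₀ (pow_nonneg hβ0' _) le_rfl (by positivity) this
      _ = 2 * (β ^ (n + 1) / ((n : ℝ) + 1)) := by rw [div_div_eq_mul_div]; ring
  have sum_h : Summable h := Summable.of_nonneg_of_le hh_nonneg hh_le2 sumL2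
  have hN2 : ∑' n : ℕ, h n ≤ 2 * L := by
    calc ∑' n : ℕ, h n ≤ ∑' n : ℕ, 2 * (β ^ (n + 1) / ((n : ℝ) + 1)) :=
          Summable.tsum_le_tsum hh_le2 sum_h sumL2
      _ = 2 * L := tsumL2
  have hN1 : 1 ≤ r → ∑' n : ℕ, h n ≤ L := by
    intro hr
    have hr1 : (1:ℝ) ≤ (r:ℝ) := by exact_mod_cast hr
    have hle : ∀ n : ℕ, h n ≤ β ^ (n + 1) / ((n : ℝ) + 1) := by
      intro n
      have hn0 := Nat.cast_nonneg (α := ℝ) n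
      exact div_le_div₀ (pow_nonneg hβ0' _) le_rfl (by positivity) (by linarith)
    calc ∑' n : ℕ, h n ≤ ∑' n : ℕ, β ^ (n + 1) / ((n : ℝ) + 1) :=
          Summable.tsum_le_tsum hle sum_h sumL
      _ = L := hasL.tsum_eq
  -- tail bound
  have sum_tail : Summable (fun n : ℕ => g (n + (r + 1))) := (summable_nat_add_iff (r + 1)).mpr sum_g
  have hT_pt : ∀ n : ℕ, g (n + (r + 1)) ≤ 2 * (β ^ (n + 1) / ((n : ℝ) + 1)) := by
    intro n
    have hn0 := Nat.cast_nonneg (α := ℝ) n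
    have hc : ((n + (r + 1) : ℕ) : ℝ) = (n : ℝ) + (r : ℝ) + 1 := by push_cast; ring
    have hpos : (0:ℝ) < (n : ℝ) + (r : ℝ) + 1 - b := by linarith
    have habs : |((n + (r + 1) : ℕ) : ℝ) - b| = (n : ℝ) + (r : ℝ) + 1 - b := by
      rw [hc, abs_of_pos hpos]
    have h1 : β ^ (n + (r + 1)) ≤ β ^ (n + 1) := pow_le_pow_of_le_one hβ0' hβ1' (by omega)
    have h2 : ((n:ℝ) + 1) / 2 ≤ (n : ℝ) + (r : ℝ) + 1 - b := by linarith
    simp only [hgdef]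
    rw [habs]
    calc β ^ (n + (r + 1)) / ((n : ℝ) + (r : ℝ) + 1 - b)
        ≤ β ^ (n + 1) / (((n:ℝ) + 1) / 2) := div_le_div₀ (pow_nonneg hβ0' _) h1 (by positivity) h2
      _ = 2 * (β ^ (n + 1) / ((n : ℝ) + 1)) := by rw [div_div_eq_mul_div]; ring
  have hT : ∑' n : ℕ, g (n + (r + 1)) ≤ 2 * L := by
    calc ∑' n : ℕ, g (n + (r + 1)) ≤ ∑' n : ℕ, 2 * (β ^ (n + 1) / ((n : ℝ) + 1)) :=
          Summable.tsum_le_tsum hT_pt sum_tail sumL2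
      _ = 2 * L := tsumL2
  -- diagonal bound
  have hDiag : ∑ i ∈ Finset.range r, g i ≤ (2 + L) + 2 * L := by
    set φ : ℕ → ℝ := fun i => if i = 0 then 2 else β ^ i / (i : ℝ) with hφdef
    set ψ : ℕ → ℝ := fun i => 2 * (β ^ (i + 1) / ((i : ℝ) + 1)) with hψdef
    have hφ_nonneg : ∀ i, 0 ≤ φ i := by
      intro i; simp only [hφdef]; split
      · norm_num
      · positivity
    have hψ_nonneg : ∀ i, 0 ≤ ψ i := by
      intro i; simp only [hψdef]; positivity
    have hφshift : (fun n : ℕ => φ (n + 1)) = fun n : ℕ => β ^ (n + 1) / ((n : ℝ) + 1) := by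
      funext n
      simp only [hφdef, Nat.succ_ne_zero, if_false]
      push_cast; ring
    have sumφ : Summable φ := (summable_nat_add_iff 1).mp (hφshift ▸ sumL)
    have tsumφ : ∑' i : ℕ, φ i = 2 + L := by
      rw [Summable.tsum_eq_zero_add sumφ]
      have : ∑' n : ℕ, φ (n + 1) = L := by rw [hφshift, hasL.tsum_eq]
      rw [this]
      simp [hφdef]
    have hpt : ∀ i ∈ Finset.range r, g i ≤ φ i + ψ (r - 1 - i) := by
      intro i hi
      have hir : i < r := Finset.mem_range.mp hi
      have hcast : (i : ℝ) + 1 ≤ (r : ℝ) := by exact_mod_cast hir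
      have hpos : 0 < b - (i : ℝ) := by linarith
      have habsi : |(i : ℝ) - b| = b - (i : ℝ) := by
        rw [abs_sub_comm, abs_of_pos hpos]
      by_cases h2i : 2 * i < r
      · have hri : (i : ℝ) + (i : ℝ) + 1 ≤ (r : ℝ) := by
          have : (2 * i + 1 : ℕ) ≤ r := by omega
          have := (Nat.cast_le (α := ℝ)).mpr this
          push_cast at this; linarith
        have hd2 : (i : ℝ) + 1 / 2 ≤ b - (i : ℝ) := by linarith
        have hgφ : g i ≤ φ i := by
          simp only [hgdef, hφdef]
          rw [habsi]
          by_cases hi0 : i = 0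
          · subst hi0
            simp only [if_true, Nat.cast_zero, pow_zero, sub_zero]
            rw [div_le_iff₀ (by linarith)]
            linarith
          · have hi1 : (1 : ℝ) ≤ (i : ℝ) := by
              exact_mod_cast Nat.one_le_iff_ne_zero.mpr hi0
            rw [if_neg hi0]
            exact div_le_div₀ (pow_nonneg hβ0' _) le_rfl (by linarith) (by linarith)
        linarith [hψ_nonneg (r - 1 - i)]
      · have hle : r - i ≤ i := by omega
        have h1r : 1 ≤ r - i := by omega
        have hβpow : β ^ i ≤ β ^ (r - i) := pow_le_pow_of_le_one hβ0' hβ1' hle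
        have hcast2 : ((r - i : ℕ) : ℝ) = (r : ℝ) - (i : ℝ) := by
          rw [Nat.cast_sub hir.le]
        have ht1 : (1 : ℝ) ≤ (r : ℝ) - (i : ℝ) := by
          have := (Nat.cast_le (α := ℝ)).mpr h1r
          rw [hcast2] at this; simpa using this
        have hd3 : ((r : ℝ) - (i : ℝ)) / 2 ≤ b - (i : ℝ) := by linarith
        have hidx : r - 1 - i + 1 = r - i := by omega
        have hcast3 : ((r - 1 - i : ℕ) : ℝ) + 1 = (r : ℝ) - (i : ℝ) := by
          rw [← hcast2, ← hidx]; push_cast; ring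
        have hgψ : g i ≤ ψ (r - 1 - i) := by
          simp only [hgdef, hψdef]
          rw [habsi, hidx, hcast3]
          calc β ^ i / (b - (i : ℝ)) ≤ β ^ (r - i) / (((r : ℝ) - (i : ℝ)) / 2) :=
              div_le_div₀ (pow_nonneg hβ0' _) hβpow (by linarith) hd3
            _ = 2 * (β ^ (r - i) / ((r : ℝ) - (i : ℝ))) := by rw [div_div_eq_mul_div]; ring
        linarith [hφ_nonneg i]
    calc ∑ i ∈ Finset.range r, g i ≤ ∑ i ∈ Finset.range r, (φ i + ψ (r - 1 - i)) :=
          Finset.sum_le_sum hpt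
      _ = ∑ i ∈ Finset.range r, φ i + ∑ i ∈ Finset.range r, ψ (r - 1 - i) :=
          Finset.sum_add_distrib
      _ = ∑ i ∈ Finset.range r, φ i + ∑ i ∈ Finset.range r, ψ i := by
          rw [Finset.sum_range_reflect]
      _ ≤ (2 + L) + 2 * L := by
          have h1 : ∑ i ∈ Finset.range r, φ i ≤ 2 + L := by
            rw [← tsumφ]
            exact Summable.sum_le_tsum _ (fun i _ => hφ_nonneg i) sumφ
          have h2 : ∑ i ∈ Finset.range r, ψ i ≤ 2 * L := by
            rw [← tsumL2]
            exact Summable.sum_le_tsum _ (fun i _ => hψ_nonneg i) sumL2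
          linarith
  -- decomposition of the ℤ-sum
  have hfg : (fun n : ℕ => β ^ ((n : ℤ)).natAbs / |((n : ℤ) : ℝ) - b|) = g := by
    funext n
    simp [hgdef]
  have hfh : (fun n : ℕ => β ^ (-((n : ℤ) + 1)).natAbs / |((-((n : ℤ) + 1) : ℤ) : ℝ) - b|) = h := by
    funext n
    have h1 : (-((n : ℤ) + 1)).natAbs = n + 1 := by omega
    have h2 : ((-((n : ℤ) + 1) : ℤ) : ℝ) - b = -(((n : ℝ) + 1 + b)) := by push_cast; ring
    simp only [hhdef, h1, h2, abs_neg, abs_of_pos (hh_denom n)]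
  have hP : HasSum (fun n : ℕ => β ^ ((n : ℤ)).natAbs / |((n : ℤ) : ℝ) - b|) (∑' n : ℕ, g n) := by
    rw [hfg]; exact sum_g.hasSum
  have hNs : HasSum (fun n : ℕ => β ^ (-((n : ℤ) + 1)).natAbs / |((-((n : ℤ) + 1) : ℤ) : ℝ) - b|)
      (∑' n : ℕ, h n) := by
    rw [hfh]; exact sum_h.hasSum
  have htot : ∑' m : ℤ, β ^ m.natAbs / |(m : ℝ) - b| = (∑' n : ℕ, g n) + ∑' n : ℕ, h n :=
    (HasSum.of_nat_of_neg_add_one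
      (f := fun m : ℤ => β ^ m.natAbs / |(m : ℝ) - b|) hP hNs).tsum_eq
  have hPdec : ∑ i ∈ Finset.range (r + 1), g i + ∑' n : ℕ, g (n + (r + 1)) = ∑' n : ℕ, g n :=
    Summable.sum_add_tsum_nat_add (r + 1) sum_g
  have hFsplit : ∑ i ∈ Finset.range (r + 1), g i = ∑ i ∈ Finset.range r, g i + g r :=
    Finset.sum_range_succ g r
  rw [htot, ← hPdec, hFsplit]
  rcases Nat.eq_zero_or_pos r with hr0' | hr1
  · subst hr0'
    have hN := hN2
    simp only [Finset.range_zero, Finset.sum_empty, zero_add]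
    linarith [hT, hgr, hL0]
  · have hN := hN1 hr1
    linarith [hT, hgr, hDiag]

/-- For `0 ≤ β < 1`, `a ∉ ℤ` and any integer `j`,
`∑_{n ∈ ℤ} β^{|n+j|}/|n − a| ≤ 1/dist(a,ℤ) + 2 + 6·|log(1−β)|`,
where `dist(a,ℤ) = |a − round a|`. -/
theorem sum_beta_div_abs_le (β a : ℝ) (hβ0 : 0 ≤ β) (hβ1 : β < 1)
    (ha : ∀ k : ℤ, a ≠ k) (j : ℤ) :
    ∑' n : ℤ, β ^ (n + j).natAbs / |(n : ℝ) - a|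
      ≤ 1 / |a - round a| + 2 + 6 * |Real.log (1 - β)| := by
  have hra : a - (round a : ℝ) ≠ 0 := sub_ne_zero.mpr (ha (round a))
  have hd_pos : 0 < |a - (round a : ℝ)| := abs_pos.mpr hra
  rcases eq_or_lt_of_le hβ0 with hβ0' | hβ0'
  · -- β = 0
    rw [← hβ0']
    rw [tsum_eq_single (-j) (by
      intro n hn
      have : (n + j).natAbs ≠ 0 := by omega
      rw [zero_pow this, zero_div])]
    have h0 : ((-j : ℤ) + j).natAbs = 0 := by omega
    rw [h0, pow_zero]
    have h1 : |a - (round a : ℝ)| ≤ |((-j : ℤ) : ℝ) - a| := by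
      rw [abs_sub_comm ((( -j : ℤ) : ℝ)) a]
      exact round_min a (-j)
    have h2 : 1 / |((-j : ℤ) : ℝ) - a| ≤ 1 / |a - (round a : ℝ)| :=
      one_div_le_one_div_of_le hd_pos h1
    simp only [sub_zero, Real.log_one, abs_zero, mul_zero, add_zero]
    linarith
  · -- 0 < β
    have hlog : |Real.log (1 - β)| = -Real.log (1 - β) :=
      abs_of_neg (Real.log_neg (by linarith) (by linarith))
    rw [hlog]
    set b := a + (j : ℝ) with hbdef
    have hrb : round b = round a + j := by rw [hbdef, round_add_intCast]
    have hbr_eq : b - (round b : ℝ) = a - (round a : ℝ) := by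
      rw [hrb]; push_cast; ring
    have hb_round : |b - (round b : ℝ)| ≤ 1 / 2 := abs_sub_round b
    have hb_ne : b ≠ (round b : ℝ) := by
      intro hk
      exact hra (by rw [← hbr_eq]; exact sub_eq_zero.mpr hk)
    have hstep : ∑' n : ℤ, β ^ (n + j).natAbs / |(n : ℝ) - a|
        = ∑' m : ℤ, β ^ m.natAbs / |(m : ℝ) - b| := by
      rw [← (Equiv.addRight j).tsum_eq (fun m : ℤ => β ^ m.natAbs / |(m : ℝ) - b|)]
      apply tsum_congr
      intro n
      have : ((Equiv.addRight j) n) = n + j := rfl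
      rw [this]
      congr 1
      rw [hbdef]
      push_cast
      congr 1
      ring
    rw [hstep]
    rcases le_or_gt 0 (round b) with hge | hlt
    · have hr : (((round b).toNat : ℕ) : ℝ) = ((round b : ℤ) : ℝ) := by
        exact_mod_cast Int.toNat_of_nonneg hge
      have hkey := key β b hβ0' hβ1 (round b).toNat
        (by rw [hr]; exact hb_round) (by rw [hr]; exact hb_ne)
      rw [hr] at hkey
      rw [hbr_eq] at hkey
      exact hkey
    · -- reflect
      have hneg : ∑' m : ℤ, β ^ m.natAbs / |(m : ℝ) - b|
          = ∑' m : ℤ, β ^ m.natAbs / |(m : ℝ) - (-b)| := by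
        rw [← (Equiv.neg ℤ).tsum_eq (fun m : ℤ => β ^ m.natAbs / |(m : ℝ) - (-b)|)]
        apply tsum_congr
        intro n
        have h1 : ((Equiv.neg ℤ) n) = -n := rfl
        rw [h1]
        simp only [Int.natAbs_neg]
        congr 1
        push_cast
        rw [show -(n : ℝ) - -b = -((n : ℝ) - b) from by ring, abs_neg]
      rw [hneg]
      have hge' : 0 ≤ -round b := by omega
      have hr : (((-round b).toNat : ℕ) : ℝ) = -((round b : ℤ) : ℝ) := by
        have := Int.toNat_of_nonneg hge'
        exact_mod_cast this
      have h1 : -b - (((-round b).toNat : ℕ) : ℝ) = -(b - (round b : ℝ)) := by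
        rw [hr]; ring
      have hkey := key β (-b) hβ0' hβ1 (-round b).toNat
        (by rw [h1, abs_neg]; exact hb_round)
        (by
          rw [hr]
          intro hk
          exact hb_ne (by linarith [neg_eq_iff_eq_neg.mp hk]))
      have h2 : |(-b) - (((-round b).toNat : ℕ) : ℝ)| = |a - (round a : ℝ)| := by
        rw [h1, abs_neg, hbr_eq]
      rw [h2] at hkey
      exact hkey
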